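/- Let X be binary (J = 2), K ≥ 1, and let p be a joint distribution of (T,X,Y,M) satisfying missing mechanism 2 that is observably positive. Then for each fixed t ∈ {0,1} the following three conditions are equivalent: (i) the 2 × K real matrix Θ_t with (x,y) entry p(t,x,y,0) has rank 2; (ii) X and Y are conditionally dependent given T = t, i.e. it is not the case that p(t,x,y,+)·p(t,+,+,+) = p(t,x,+,+)·p(t,+,y,+) for all (x,y); (iii) X and Y are conditionally dependent given (T = t, M = 0), i.e. it is not the case that p(t,x,y,0)·p(t,+,+,0) = p(t,x,+,0)·p(t,+,y,0) for all (x,y). -/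

import Mathlib

open Matrix Finset

/-- cross-ratio condition -/
private def Cross {K : ℕ} (b : Fin 2 → Fin K → ℝ) : Prop :=
  ∀ y y', b 0 y * b 1 y' = b 0 y' * b 1 y

private lemma cross_of_ind {K : ℕ} (hK : 1 ≤ K) (b : Fin 2 → Fin K → ℝ)
    (hb : ∀ x y, 0 < b x y)
    (h : ∀ x y, b x y * (∑ x', ∑ y', b x' y') = (∑ y', b x y') * (∑ x', b x' y)) :
    Cross b := by
  haveI : NeZero K := ⟨by omega⟩
  intro y y'
  have hT : 0 < ∑ x', ∑ y', b x' y' :=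
    Finset.sum_pos (fun x _ => Finset.sum_pos (fun y _ => hb x y) Finset.univ_nonempty)
      Finset.univ_nonempty
  have h1 := h 0 y
  have h2 := h 1 y'
  have h3 := h 0 y'
  have h4 := h 1 y
  have key : (b 0 y * b 1 y') * ((∑ x', ∑ y', b x' y') * (∑ x', ∑ y', b x' y')) =
      (b 0 y' * b 1 y) * ((∑ x', ∑ y', b x' y') * (∑ x', ∑ y', b x' y')) := by
    calc (b 0 y * b 1 y') * ((∑ x', ∑ y', b x' y') * (∑ x', ∑ y', b x' y'))
        = (b 0 y * (∑ x', ∑ y', b x' y')) * (b 1 y' * (∑ x', ∑ y', b x' y')) := by ring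
      _ = ((∑ y'', b 0 y'') * (∑ x', b x' y)) * ((∑ y'', b 1 y'') * (∑ x', b x' y')) := by
          rw [h1, h2]
      _ = ((∑ y'', b 0 y'') * (∑ x', b x' y')) * ((∑ y'', b 1 y'') * (∑ x', b x' y)) := by ring
      _ = (b 0 y' * (∑ x', ∑ y', b x' y')) * (b 1 y * (∑ x', ∑ y', b x' y')) := by
          rw [h3, h4]
      _ = (b 0 y' * b 1 y) * ((∑ x', ∑ y', b x' y') * (∑ x', ∑ y', b x' y')) := by ring
  exact mul_right_cancel₀ (by positivity) key

private lemma ind_of_cross {K : ℕ} (hK : 1 ≤ K) (b : Fin 2 → Fin K → ℝ)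
    (hb : ∀ x y, 0 < b x y) (hc : Cross b) :
    ∀ x y, b x y * (∑ x', ∑ y', b x' y') = (∑ y', b x y') * (∑ x', b x' y) := by
  have y0 : Fin K := ⟨0, by omega⟩
  obtain ⟨l, hb1⟩ : ∃ l : ℝ, ∀ y, b 1 y = l * b 0 y := by
    refine ⟨b 1 y0 / b 0 y0, fun y => ?_⟩
    have h0 : b 0 y0 ≠ 0 := ne_of_gt (hb 0 y0)
    rw [div_mul_eq_mul_div, eq_div_iff h0, mul_comm (b 1 y0)]
    linarith [hc y y0]
  have hsum1 : (∑ y', b 1 y') = l * ∑ y', b 0 y' := by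
    rw [Finset.mul_sum]; exact Finset.sum_congr rfl fun y' _ => hb1 y'
  intro x y
  fin_cases x
  · show b 0 y * (∑ x', ∑ y', b x' y') = (∑ y', b 0 y') * (∑ x', b x' y)
    simp only [Fin.sum_univ_two, hb1, ← Finset.mul_sum]
    ring
  · show b 1 y * (∑ x', ∑ y', b x' y') = (∑ y', b 1 y') * (∑ x', b x' y)
    simp only [Fin.sum_univ_two, hb1, ← Finset.mul_sum]
    ring

private lemma rank_two_iff_cross {K : ℕ} (hK : 1 ≤ K) (a : Fin 2 → Fin K → ℝ)
    (ha : ∀ x y, 0 < a x y) :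
    (Matrix.of a : Matrix (Fin 2) (Fin K) ℝ).rank = 2 ↔ ¬ Cross a := by
  constructor
  · intro hr hcross
    -- cross implies rank ≤ 1
    haveI : NeZero K := ⟨by omega⟩
    have y0 : Fin K := ⟨0, by omega⟩
    obtain ⟨l, hb1⟩ : ∃ l : ℝ, ∀ y, a 1 y = l * a 0 y := by
      refine ⟨a 1 y0 / a 0 y0, fun y => ?_⟩
      have h0 : a 0 y0 ≠ 0 := ne_of_gt (ha 0 y0)
      rw [div_mul_eq_mul_div, eq_div_iff h0, mul_comm (a 1 y0)]
      linarith [hcross y y0]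
    have hfac : (Matrix.of a : Matrix (Fin 2) (Fin K) ℝ) =
        (Matrix.of ![![1], ![l]] : Matrix (Fin 2) (Fin 1) ℝ) *
        (Matrix.of (fun _ y => a 0 y) : Matrix (Fin 1) (Fin K) ℝ) := by
      ext i j
      fin_cases i <;> simp [Matrix.mul_apply, hb1]
    have h1 : (Matrix.of a : Matrix (Fin 2) (Fin K) ℝ).rank ≤ 1 := by
      rw [hfac]
      calc _ ≤ (Matrix.of ![![1], ![l]] : Matrix (Fin 2) (Fin 1) ℝ).rank :=
            Matrix.rank_mul_le_left _ _
        _ ≤ Fintype.card (Fin 1) := Matrix.rank_le_card_width _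
        _ = 1 := by simp
    omega
  · intro hcross
    rw [Cross] at hcross
    push_neg at hcross
    obtain ⟨y, y', hne⟩ := hcross
    apply le_antisymm
    · calc (Matrix.of a : Matrix (Fin 2) (Fin K) ℝ).rank
          ≤ Fintype.card (Fin 2) := Matrix.rank_le_card_height _
        _ = 2 := by simp
    · set E : Matrix (Fin K) (Fin 2) ℝ := fun k j => if k = ![y, y'] j then 1 else 0 with hE
      have hBE : (Matrix.of a : Matrix (Fin 2) (Fin K) ℝ) * E =
          Matrix.of ![![a 0 y, a 0 y'], ![a 1 y, a 1 y']] := by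
        ext i j
        have : ((Matrix.of a : Matrix (Fin 2) (Fin K) ℝ) * E) i j = a i (![y, y'] j) := by
          rw [Matrix.mul_apply]
          simp [hE, mul_ite]
        rw [this]
        fin_cases i <;> fin_cases j <;> simp
      have hdet : (Matrix.of ![![a 0 y, a 0 y'], ![a 1 y, a 1 y']] : Matrix (Fin 2) (Fin 2) ℝ).det ≠ 0 := by
        rw [Matrix.det_fin_two]
        simp only [Matrix.of_apply]
        simp only [Matrix.cons_val', Matrix.cons_val_zero, Matrix.cons_val_one, Matrix.head_cons,
          Matrix.empty_val', Matrix.cons_val_fin_one, Matrix.head_fin_const]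
        intro h
        apply hne
        nlinarith [h]
      have hrankB : (Matrix.of ![![a 0 y, a 0 y'], ![a 1 y, a 1 y']] : Matrix (Fin 2) (Fin 2) ℝ).rank = 2 := by
        rw [Matrix.rank_of_isUnit _ ((Matrix.isUnit_iff_isUnit_det _).mpr (isUnit_iff_ne_zero.mpr hdet))]
        simp
      calc (2 : ℕ) = (Matrix.of ![![a 0 y, a 0 y'], ![a 1 y, a 1 y']] : Matrix (Fin 2) (Fin 2) ℝ).rank :=
            hrankB.symm
        _ = ((Matrix.of a : Matrix (Fin 2) (Fin K) ℝ) * E).rank := by rw [hBE]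
        _ ≤ (Matrix.of a : Matrix (Fin 2) (Fin K) ℝ).rank := Matrix.rank_mul_le_left _ _

/-- For binary X under missing mechanism 2, for each t the rank-2 condition on
Θ_t is equivalent to X ⫫̸ Y | (T=t), which is equivalent to the testable condition
X ⫫̸ Y | (T=t, M=0). -/
theorem mechanism2_rank_condition_binaryX (K : ℕ) (hK : 1 ≤ K)
    (p : Fin 2 → Fin 2 → Fin K → Fin 2 → ℝ)
    (hp_nonneg : ∀ t x y m, 0 ≤ p t x y m)
    (hp_sum : ∑ t, ∑ x, ∑ y, ∑ m, p t x y m = 1)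
    -- missing mechanism 2: p(t,x,y,m)·p(t,x,+,+) = p(t,x,y,+)·p(t,x,+,m)
    (hp_mech : ∀ t x y m,
      p t x y m * (∑ y', ∑ m', p t x y' m') = (∑ m', p t x y m') * (∑ y', p t x y' m))
    -- observable positivity
    (hp_pos : ∀ t x y, 0 < p t x y 0)
    (t : Fin 2) :
    -- (i) ↔ (ii)  and  (ii) ↔ (iii)
    (((Matrix.of (fun x y => p t x y 0) : Matrix (Fin 2) (Fin K) ℝ).rank = 2 ↔
      ¬ (∀ x y, (∑ m, p t x y m) * (∑ x', ∑ y', ∑ m, p t x' y' m)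
          = (∑ y', ∑ m, p t x y' m) * (∑ x', ∑ m, p t x' y m))) ∧
    ((¬ (∀ x y, (∑ m, p t x y m) * (∑ x', ∑ y', ∑ m, p t x' y' m)
          = (∑ y', ∑ m, p t x y' m) * (∑ x', ∑ m, p t x' y m))) ↔
      ¬ (∀ x y, p t x y 0 * (∑ x', ∑ y', p t x' y' 0)
          = (∑ y', p t x y' 0) * (∑ x', p t x' y 0)))) := by
  haveI : NeZero K := ⟨by omega⟩
  -- positivity facts
  have hapos : ∀ x y, 0 < p t x y 0 := hp_pos t
  have hPpos : ∀ x y, 0 < ∑ m, p t x y m := by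
    intro x y
    rw [Fin.sum_univ_two]
    have := hp_pos t x y
    have := hp_nonneg t x y 1
    linarith
  have hQpos : ∀ x : Fin 2, 0 < ∑ y', p t x y' 0 :=
    fun x => Finset.sum_pos (fun y _ => hp_pos t x y) Finset.univ_nonempty
  have hSpos : ∀ x : Fin 2, 0 < ∑ y', ∑ m', p t x y' m' := by
    intro x
    refine Finset.sum_pos (fun y _ => ?_) Finset.univ_nonempty
    rw [Fin.sum_univ_two]
    have := hp_pos t x y
    have := hp_nonneg t x y 1
    linarith
  -- P = c • a rowwise
  set c : Fin 2 → ℝ := fun x => (∑ y', ∑ m', p t x y' m') / (∑ y', p t x y' 0) with hc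
  have hcpos : ∀ x, 0 < c x := fun x => div_pos (hSpos x) (hQpos x)
  have hPa : ∀ x y, (∑ m, p t x y m) = c x * p t x y 0 := by
    intro x y
    rw [hc]
    rw [div_mul_eq_mul_div, eq_div_iff (ne_of_gt (hQpos x))]
    linarith [hp_mech t x y 0]
  -- Cross P ↔ Cross a
  have hCrossPA : Cross (fun x y => ∑ m, p t x y m) ↔ Cross (fun x y => p t x y 0) := by
    constructor
    · intro h y y'
      have hyy := h y y'
      simp only [hPa] at hyy
      exact mul_left_cancel₀ (ne_of_gt (mul_pos (hcpos 0) (hcpos 1)))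
        (by linear_combination hyy)
    · intro h y y'
      have hyy := h y y'
      simp only [hPa]
      linear_combination c 0 * c 1 * hyy
  have hIa : (∀ x y, p t x y 0 * (∑ x', ∑ y', p t x' y' 0)
          = (∑ y', p t x y' 0) * (∑ x', p t x' y 0)) ↔ Cross (fun x y => p t x y 0) :=
    ⟨cross_of_ind hK _ hapos, ind_of_cross hK _ hapos⟩
  have hIP : (∀ x y, (∑ m, p t x y m) * (∑ x', ∑ y', ∑ m, p t x' y' m)
          = (∑ y', ∑ m, p t x y' m) * (∑ x', ∑ m, p t x' y m)) ↔
        Cross (fun x y => ∑ m, p t x y m) :=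
    ⟨cross_of_ind hK _ hPpos, ind_of_cross hK _ hPpos⟩
  have hRank := rank_two_iff_cross hK (fun x y => p t x y 0) hapos
  exact ⟨hRank.trans (not_congr ((hIP.trans hCrossPA))).symm,
    not_congr ((hIP.trans hCrossPA).trans hIa.symm)⟩
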